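/- Suppose the feature matrix Φ ∈ ℝ^{|S||A| × d} is square and full rank (d = |S||A|). If γ² ≥ 1/|A|, then there is no behavior policy π with stationary distribution μ (μ(s) > 0 for all s) such that γ² E_μ[max_a (φ(s,a)ᵀθ)²] < E_μ[(φ(s,a)ᵀθ)²] for all θ ≠ 0. -/

import Mathlib

open scoped RealInnerProductSpace

theorem stmt_18 {S A : Type*} [Fintype S] [Fintype A] [Nonempty S] [Nonempty A] {d : ℕ}
    (φ : S → A → EuclideanSpace ℝ (Fin d))
    -- the feature matrix is square and full rank
    (hd : Fintype.card S * Fintype.card A = d)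
    (hfull : LinearIndependent ℝ (fun p : S × A => φ p.1 p.2))
    (γ : ℝ) (hγ : γ ∈ Set.Ioo (0:ℝ) 1) (hγm : 1 / (Fintype.card A : ℝ) ≤ γ ^ 2) :
    ¬ ∃ (π : S → A → ℝ) (μ : S → ℝ),
      (∀ s a, 0 ≤ π s a) ∧ (∀ s, ∑ a : A, π s a = 1) ∧
      (∀ s, 0 < μ s) ∧ (∑ s : S, μ s = 1) ∧
      (∀ θ : EuclideanSpace ℝ (Fin d), θ ≠ 0 →
        γ ^ 2 * ∑ s : S, μ s *
            (Finset.univ.sup' Finset.univ_nonempty (fun a : A => ⟪φ s a, θ⟫ ^ 2))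
          < ∑ s : S, μ s * ∑ a : A, π s a * ⟪φ s a, θ⟫ ^ 2) := by
  classical
  rintro ⟨π, μ, hπ0, hπ1, hμ0, hμ1, h⟩
  obtain ⟨s₀⟩ := ‹Nonempty S›
  have hmpos : (0:ℝ) < Fintype.card A := by
    exact_mod_cast Fintype.card_pos
  -- choose an action with small probability
  obtain ⟨a₀, ha₀⟩ : ∃ a, π s₀ a ≤ 1 / Fintype.card A := by
    by_contra hc
    push_neg at hc
    have hlt := Finset.sum_lt_sum_of_nonempty (Finset.univ_nonempty (α := A))
      (fun a _ => hc a)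
    rw [hπ1 s₀, Finset.sum_const, Finset.card_univ, nsmul_eq_mul,
      mul_one_div, div_self (ne_of_gt hmpos)] at hlt
    exact lt_irrefl _ hlt
  -- build a basis from the features
  have hcard : Fintype.card (S × A) = Module.finrank ℝ (EuclideanSpace ℝ (Fin d)) := by
    simp [Fintype.card_prod, hd]
  let B := basisOfLinearIndependentOfCardEqFinrank hfull hcard
  have hB : ∀ p : S × A, B p = φ p.1 p.2 := fun p => by
    rw [coe_basisOfLinearIndependentOfCardEqFinrank]
  let θ : EuclideanSpace ℝ (Fin d) :=
    (InnerProductSpace.toDual ℝ _).symm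
      (LinearMap.toContinuousLinearMap (B.dualBasis (s₀, a₀)))
  have hinner : ∀ p : S × A, ⟪φ p.1 p.2, θ⟫ = if p = (s₀, a₀) then 1 else 0 := by
    intro p
    rw [real_inner_comm, ← hB p]
    simp [θ, InnerProductSpace.toDual_symm_apply, Module.Basis.dualBasis_apply_self,
      Finsupp.single_apply]
  have hθ : θ ≠ 0 := by
    intro h0
    have := hinner (s₀, a₀)
    rw [h0, inner_zero_right, if_pos rfl] at this
    norm_num at this
  have key := h θ hθ
  -- compute sup values
  have hsup : ∀ s : S,
      (Finset.univ.sup' Finset.univ_nonempty (fun a : A => ⟪φ s a, θ⟫ ^ 2))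
        = if s = s₀ then 1 else 0 := by
    intro s
    by_cases hs : s = s₀
    · subst hs
      rw [if_pos rfl]
      apply le_antisymm
      · apply Finset.sup'_le
        intro a _
        rw [hinner (s, a)]
        split <;> norm_num
      · have := Finset.le_sup' (fun a : A => ⟪φ s a, θ⟫ ^ 2) (Finset.mem_univ a₀)
        rw [hinner (s, a₀), if_pos rfl] at this
        rw [one_pow] at this; exact this
    · rw [if_neg hs]
      apply le_antisymm
      · apply Finset.sup'_le
        intro a _
        rw [hinner (s, a), if_neg (by simp [hs])]
        norm_num
      · obtain ⟨a⟩ := ‹Nonempty A›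
        have := Finset.le_sup' (fun a : A => ⟪φ s a, θ⟫ ^ 2) (Finset.mem_univ a)
        rw [hinner (s, a), if_neg (by simp [hs])] at this
        rw [zero_pow two_ne_zero] at this; exact this
  have hLHS : (∑ s : S, μ s *
      (Finset.univ.sup' Finset.univ_nonempty (fun a : A => ⟪φ s a, θ⟫ ^ 2))) = μ s₀ := by
    rw [Finset.sum_eq_single s₀]
    · rw [hsup s₀, if_pos rfl, mul_one]
    · intro s _ hs; rw [hsup s, if_neg hs, mul_zero]
    · intro hm; exact absurd (Finset.mem_univ s₀) hm
  have hRHS : (∑ s : S, μ s * ∑ a : A, π s a * ⟪φ s a, θ⟫ ^ 2) = μ s₀ * π s₀ a₀ := by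
    have hin : ∀ s : S, (∑ a : A, π s a * ⟪φ s a, θ⟫ ^ 2)
        = if s = s₀ then π s₀ a₀ else 0 := by
      intro s
      by_cases hs : s = s₀
      · subst hs
        rw [if_pos rfl, Finset.sum_eq_single a₀]
        · rw [hinner (s, a₀), if_pos rfl]; ring
        · intro a _ ha
          rw [hinner (s, a), if_neg (by simp [ha])]
          ring
        · intro hm; exact absurd (Finset.mem_univ a₀) hm
      · rw [if_neg hs]
        apply Finset.sum_eq_zero
        intro a _
        rw [hinner (s, a), if_neg (by simp [hs])]
        ring
    rw [Finset.sum_eq_single s₀]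
    · rw [hin s₀, if_pos rfl]
    · intro s _ hs; rw [hin s, if_neg hs, mul_zero]
    · intro hm; exact absurd (Finset.mem_univ s₀) hm
  rw [hLHS, hRHS] at key
  have hμ := hμ0 s₀
  have h1 : γ ^ 2 < π s₀ a₀ := by
    rw [mul_comm (γ ^ 2) (μ s₀)] at key
    exact (mul_lt_mul_iff_right₀ hμ).mp key
  linarith
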